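/- The centre of the non-commutative toric algebra B = C[\underline{M}^+] = ⊕_{i,j ∈ Q_0} C[M_{ij}^+] is isomorphic to R = C[M_o^+], embedded diagonally via r ↦ r·Id. -/

import Mathlib

/-!
Non-commutative toric data `(N, Q₀, d, N⁺)`: a finite set `Q₀`, a lattice `N`, a lattice
map `d : ℤ^{Q₀} → N` whose kernel is `ℤ·𝟙`, and a saturated submonoid `N⁺` of `N` coming
from a strongly convex rational polyhedral cone, such that (1) `M_{ij}⁺ ≠ ∅` for all
`i, j ∈ Q₀`, and (2) `N⁺` is the dual of the monoid generated by all the `M_{ij}⁺`.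
Here `M = N^∨` is the dual lattice (modelled as `N →+ ℤ`), `∂ = d^∨`,
`M⁺ = (N⁺)^∨`, `M_{ij} = ∂⁻¹(j − i)`, `M_{ij}⁺ = M_{ij} ∩ M⁺` and `M_o = ∂⁻¹(0)`.
-/

section ToricData

variable {Q0 : Type} {N : Type} [AddCommGroup N]

/-- `m ∈ M⁺ = (N⁺)^∨ `: `m` is non-negative on the cone `N⁺`. -/
def MemMPlus (Nplus : AddSubmonoid N) (m : N →+ ℤ) : Prop :=
  ∀ n ∈ Nplus, 0 ≤ m n

/-- `∂ m = j − i`, i.e. `m ∈ M_{ij} = ∂⁻¹(j − i)`, where `∂` is dual to `d`. -/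
def MemMij [DecidableEq Q0] (d : (Q0 → ℤ) →+ N) (i j : Q0) (m : N →+ ℤ) : Prop :=
  ∀ v : Q0, m (d (Pi.single v 1)) = (if v = j then 1 else 0) - (if v = i then 1 else 0)

/-- `m ∈ M_{ij}⁺ = M_{ij} ∩ M⁺`. -/
def MemMijPlus [DecidableEq Q0] (d : (Q0 → ℤ) →+ N) (Nplus : AddSubmonoid N)
    (i j : Q0) (m : N →+ ℤ) : Prop :=
  MemMPlus Nplus m ∧ MemMij d i j m

/-- `m ∈ M_o = ∂⁻¹(0)`: `m` kills the image of `d`. -/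
def MemMo [DecidableEq Q0] (d : (Q0 → ℤ) →+ N) (m : N →+ ℤ) : Prop :=
  ∀ v : Q0, m (d (Pi.single v 1)) = 0

/-- `m ∈ M_o⁺ = M_o ∩ M⁺`. -/
def MemMoPlus [DecidableEq Q0] (d : (Q0 → ℤ) →+ N) (Nplus : AddSubmonoid N) (m : N →+ ℤ) : Prop :=
  MemMPlus Nplus m ∧ MemMo d m

/-- The non-commutative toric algebra `B = C[\underline{M}⁺] = ⊕_{i,j} C[M_{ij}⁺]`,
viewed inside the matrix algebra `Mat_{Q₀}(C[M])`: `b` is the matrix of an element of `B`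
when the `(i,j)` entry is supported on `M_{ij}⁺`. -/
def MemB [DecidableEq Q0] (d : (Q0 → ℤ) →+ N) (Nplus : AddSubmonoid N)
    (b : Matrix Q0 Q0 (AddMonoidAlgebra ℂ (N →+ ℤ))) : Prop :=
  ∀ i j : Q0, ∀ m ∈ (b i j).coeff.support, MemMijPlus d Nplus i j m

end ToricData

/-!
The centre of the non-commutative toric algebra `B = ⊕_{i,j} C[M_{ij}⁺]` of
non-commutative toric data `(N, Q₀, d, N⁺)` is isomorphic to `R = C[M_o⁺]`, embedded
diagonally via `r ↦ r · Id`: an element `b ∈ B` is central in `B` if and only if it is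
the scalar matrix of an element of `C[M_o⁺]`.
-/

section CancelAux

variable {N : Type} [AddCommGroup N]

lemma aux_cancel (m : N →+ ℤ) (x : AddMonoidAlgebra ℂ (N →+ ℤ))
    (h : x * AddMonoidAlgebra.single m 1 = 0) : x = 0 := by
  have := congrArg (· * AddMonoidAlgebra.single (-m) (1 : ℂ)) h
  simp only [mul_assoc, AddMonoidAlgebra.single_mul_single, add_neg_cancel, one_mul,
    zero_mul] at this
  rw [← AddMonoidAlgebra.one_def, mul_one] at this
  exact this

lemma aux_cancel' (m : N →+ ℤ) (x y : AddMonoidAlgebra ℂ (N →+ ℤ))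
    (h : x * AddMonoidAlgebra.single m 1 = y * AddMonoidAlgebra.single m 1) : x = y := by
  have := aux_cancel m (x - y) (by rw [sub_mul, h, sub_self])
  linear_combination this

end CancelAux

section StdAux

variable {Q0 : Type} [Fintype Q0] [DecidableEq Q0] {N : Type} [AddCommGroup N]

set_option linter.unusedSectionVars false in
lemma memB_std (d : (Q0 → ℤ) →+ N) (Nplus : AddSubmonoid N) (k l : Q0) (m : N →+ ℤ)
    (hm : MemMijPlus d Nplus k l m) :
    MemB d Nplus (Matrix.single k l (AddMonoidAlgebra.single m (1 : ℂ))) := by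
  intro i j m' hm'
  rw [Matrix.single, Matrix.of_apply] at hm'
  split at hm'
  · obtain ⟨rfl, rfl⟩ := ‹k = i ∧ l = j›
    rw [AddMonoidAlgebra.coeff_single, Finsupp.support_single_ne_zero m one_ne_zero, Finset.mem_singleton] at hm'
    subst hm'; exact hm
  · simp at hm'

end StdAux

theorem centre_of_toric_algebra
    {Q0 : Type} [Fintype Q0] [DecidableEq Q0]
    {N : Type} [AddCommGroup N]
    (d : (Q0 → ℤ) →+ N)
    (hker : ∀ x : Q0 → ℤ, d x = 0 ↔ ∃ c : ℤ, ∀ v : Q0, x v = c)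
    (Nplus : AddSubmonoid N)
    (hsat : ∀ (n : N) (k : ℕ), 0 < k → k • n ∈ Nplus → n ∈ Nplus)
    (hconvex : ∀ n : N, n ∈ Nplus → -n ∈ Nplus → n = 0)
    (hne : ∀ i j : Q0, ∃ m : N →+ ℤ, MemMijPlus d Nplus i j m)
    (hdual : ∀ n : N,
      (∀ (i j : Q0) (m : N →+ ℤ), MemMijPlus d Nplus i j m → 0 ≤ m n) → n ∈ Nplus)
    (b : Matrix Q0 Q0 (AddMonoidAlgebra ℂ (N →+ ℤ))) (hb : MemB d Nplus b) :
    (∀ c, MemB d Nplus c → b * c = c * b) ↔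
      ∃ r : AddMonoidAlgebra ℂ (N →+ ℤ),
        (∀ m ∈ r.coeff.support, MemMoPlus d Nplus m) ∧ b = Matrix.scalar Q0 r := by
  constructor
  · intro h
    have hoff : ∀ i k : Q0, i ≠ k → b i k = 0 := by
      intro i k hik
      obtain ⟨m, hm⟩ := hne k k
      have hcomm := h _ (memB_std d Nplus k k m hm)
      have := congrFun (congrFun hcomm i) k
      rw [Matrix.mul_single_apply_same,
        Matrix.single_mul_apply_of_ne _ _ _ _ _ hik] at this
      exact aux_cancel m _ (by rw [this])
    have hdiag : ∀ k l : Q0, b k k = b l l := by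
      intro k l
      obtain ⟨m, hm⟩ := hne k l
      have hcomm := h _ (memB_std d Nplus k l m hm)
      have := congrFun (congrFun hcomm k) l
      rw [Matrix.mul_single_apply_same,
        Matrix.single_mul_apply_same] at this
      rw [mul_comm (AddMonoidAlgebra.single m (1 : ℂ))] at this
      exact aux_cancel' m _ _ this
    rcases isEmpty_or_nonempty Q0 with hQ | ⟨⟨k0⟩⟩
    · exact ⟨0, by simp, Subsingleton.elim _ _⟩
    · refine ⟨b k0 k0, ?_, ?_⟩
      · intro m hm
        obtain ⟨h1, h2⟩ := hb k0 k0 m hm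
        exact ⟨h1, fun v => by simpa using h2 v⟩
      · ext i j
        by_cases hij : i = j
        · subst hij
          simp [Matrix.scalar_apply, hdiag i k0]
        · simp [Matrix.scalar_apply, Matrix.diagonal_apply_ne _ hij, hoff i j hij]
  · rintro ⟨r, -, rfl⟩
    intro c hc
    exact Matrix.scalar_commute r (fun c' => mul_comm r c') c
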